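/- Let ‖·‖ be a monotone norm on ℝ^K, p̄ > 0, and let T : ℝ_{≥0}^K → ℝ_{>0}^K be a continuous standard interference mapping. Define the normalized mapping T̃ : ℝ_{≥0}^K → ℝ_{>0}^K by T̃(p) := (p̄ / ‖T(p)‖)·T(p). Then: (a) T̃ has a unique fixed point p* ∈ ℝ_{>0}^K; (b) the problem of maximizing c over (c,p) ∈ ℝ_{≥0} × ℝ_{≥0}^K subject to ‖p‖ ≤ p̄ and p = c·T(p) has the unique optimal solution (p̄/‖T(p*)‖, p*); and (c) for any starting point p_1 ∈ ℝ_{≥0}^K, the sequence generated by p_{n+1} = T̃(p_n) converges to p*. -/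

import Mathlib

open Filter Topology MeasureTheory

/-- The nonnegative orthant of `ℝ^K`. -/
def NonnegOrth (K : ℕ) : Set (Fin K → ℝ) := {x | ∀ i, 0 ≤ x i}

/-- A standard interference function: positive, monotone and scalable on the
nonnegative orthant. -/
def StdIF {K : ℕ} (f : (Fin K → ℝ) → ℝ) : Prop :=
  (∀ x ∈ NonnegOrth K, 0 < f x) ∧
  (∀ x ∈ NonnegOrth K, ∀ y ∈ NonnegOrth K, (∀ i, y i ≤ x i) → f y ≤ f x) ∧
  (∀ x ∈ NonnegOrth K, ∀ α : ℝ, 1 < α → f (α • x) < α * f x)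

/-- Assumption 1: each utility `u k` equals `p k / f k p` on the nonnegative orthant,
for a continuous standard interference function `f k`. -/
def Assumption1 {K : ℕ} (u f : Fin K → (Fin K → ℝ) → ℝ) : Prop :=
  ∀ k, StdIF (f k) ∧ ContinuousOn (f k) (NonnegOrth K) ∧
    ∀ p ∈ NonnegOrth K, u k p = p k / f k p

/-- A monotone norm on `ℝ^K`. -/
def IsMonoNorm {K : ℕ} (N : (Fin K → ℝ) → ℝ) : Prop :=
  (∀ x, 0 ≤ N x) ∧ (∀ x, N x = 0 ↔ x = 0) ∧
  (∀ (a : ℝ) (x : Fin K → ℝ), N (a • x) = |a| * N x) ∧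
  (∀ x y, N (x + y) ≤ N x + N y) ∧
  (∀ x y : Fin K → ℝ, x ∈ NonnegOrth K → (∀ i, x i ≤ y i) → N x ≤ N y)

/-- The utilities of `p` are on the weak Pareto boundary under the constraint `C`. -/
def WeakPareto {K : ℕ} (u : Fin K → (Fin K → ℝ) → ℝ)
    (C : Set (Fin K → ℝ)) (p : Fin K → ℝ) : Prop :=
  ¬ ∃ p' ∈ C, ∀ k, u k p < u k p'

/-- Feasibility for the weighted max-min problem (1). -/
def Feas1 {K : ℕ} (N : (Fin K → ℝ) → ℝ) (pbar : ℝ) (p : Fin K → ℝ) : Prop :=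
  p ∈ NonnegOrth K ∧ N p ≤ pbar

/-- Optimality for the weighted max-min problem (1):
maximize `min_k (ω k)⁻¹ * u k p` subject to `‖p‖ ≤ pbar`. -/
def Sol1 {K : ℕ} (N : (Fin K → ℝ) → ℝ) (pbar : ℝ) (ω : Fin K → ℝ)
    (u : Fin K → (Fin K → ℝ) → ℝ) (p : Fin K → ℝ) : Prop :=
  Feas1 N pbar p ∧ ∀ q, Feas1 N pbar q →
    (⨅ k, (ω k)⁻¹ * u k q) ≤ ⨅ k, (ω k)⁻¹ * u k p

/-- Feasibility for the epigraph-form problem (2). -/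
def Feas2 {K : ℕ} (N : (Fin K → ℝ) → ℝ) (pbar : ℝ) (ω : Fin K → ℝ)
    (u : Fin K → (Fin K → ℝ) → ℝ) (c : ℝ) (p : Fin K → ℝ) : Prop :=
  0 ≤ c ∧ p ∈ NonnegOrth K ∧ N p ≤ pbar ∧ ∀ k, c * ω k ≤ u k p

/-- Optimality for the epigraph-form problem (2): maximize `c` subject to
`‖p‖ ≤ pbar` and `u k p ≥ c * ω k` for all `k`. -/
def Sol2 {K : ℕ} (N : (Fin K → ℝ) → ℝ) (pbar : ℝ) (ω : Fin K → ℝ)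
    (u : Fin K → (Fin K → ℝ) → ℝ) (c : ℝ) (p : Fin K → ℝ) : Prop :=
  Feas2 N pbar ω u c p ∧ ∀ c' p', Feas2 N pbar ω u c' p' → c' ≤ c

/-- Feasibility for the fixed-point-form problem (4). -/
def Feas4 {K : ℕ} (N : (Fin K → ℝ) → ℝ) (pbar : ℝ)
    (T : (Fin K → ℝ) → Fin K → ℝ) (c : ℝ) (p : Fin K → ℝ) : Prop :=
  0 ≤ c ∧ p ∈ NonnegOrth K ∧ N p ≤ pbar ∧ p = c • T p

/-- Optimality for the fixed-point-form problem (4): maximize `c` subject to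
`‖p‖ ≤ pbar` and `p = c • T p`. -/
def Sol4 {K : ℕ} (N : (Fin K → ℝ) → ℝ) (pbar : ℝ)
    (T : (Fin K → ℝ) → Fin K → ℝ) (c : ℝ) (p : Fin K → ℝ) : Prop :=
  Feas4 N pbar T c p ∧ ∀ c' p', Feas4 N pbar T c' p' → c' ≤ c

namespace Stmt7Aux

variable {K : ℕ} {N : (Fin K → ℝ) → ℝ} {T : (Fin K → ℝ) → Fin K → ℝ} {pbar : ℝ}

lemma mem_orth {x : Fin K → ℝ} : x ∈ NonnegOrth K ↔ ∀ i, 0 ≤ x i := Iff.rfl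

lemma smul_mem_orth {c : ℝ} (hc : 0 ≤ c) {x} (hx : x ∈ NonnegOrth K) :
    c • x ∈ NonnegOrth K := fun i => mul_nonneg hc (hx i)

section NormLemmas
variable (hN : IsMonoNorm N)
include hN

lemma N_nonneg (x) : 0 ≤ N x := hN.1 x
lemma N_zero : N (0 : Fin K → ℝ) = 0 := (hN.2.1 0).mpr rfl
lemma N_smul (a x) : N (a • x) = |a| * N x := hN.2.2.1 a x
lemma N_mono {x y : Fin K → ℝ} (hx : x ∈ NonnegOrth K) (h : ∀ i, x i ≤ y i) :
    N x ≤ N y := hN.2.2.2.2 x y hx h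
lemma N_pos {x : Fin K → ℝ} (hx : x ≠ 0) : 0 < N x :=
  lt_of_le_of_ne (hN.1 x) (fun h => hx ((hN.2.1 x).mp h.symm))

lemma N_sum_le (s : Finset (Fin K)) (f : Fin K → Fin K → ℝ) :
    N (∑ i ∈ s, f i) ≤ ∑ i ∈ s, N (f i) := by
  classical
  induction s using Finset.induction_on with
  | empty => simp [N_zero hN]
  | @insert a s hnotmem ih =>
      rw [Finset.sum_insert hnotmem, Finset.sum_insert hnotmem]
      exact (hN.2.2.2.1 _ _).trans (by linarith)

lemma N_le_coord_sum (z : Fin K → ℝ) :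
    N z ≤ ∑ i, |z i| * N (Pi.single i 1) := by
  classical
  have hz : z = ∑ i, z i • (Pi.single i 1 : Fin K → ℝ) := by
    funext j
    rw [Finset.sum_apply]
    simp [Pi.single_apply]
  calc N z = N (∑ i, z i • (Pi.single i 1 : Fin K → ℝ)) := by rw [← hz]
    _ ≤ ∑ i, N (z i • (Pi.single i 1 : Fin K → ℝ)) := N_sum_le hN _ _
    _ = ∑ i, |z i| * N (Pi.single i 1) := by simp [N_smul hN]

lemma N_cont : Continuous N := by
  rw [continuous_iff_continuousAt]
  intro x
  have key : ∀ y : Fin K → ℝ, |N y - N x| ≤ ∑ i, |y i - x i| * N (Pi.single i 1) := by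
    intro y
    have h1 : N y ≤ N x + N (y - x) := by
      have := hN.2.2.2.1 x (y - x); simpa using this
    have h2 : N x ≤ N y + N (y - x) := by
      have := hN.2.2.2.1 y (x - y)
      have hxy : N (x - y) = N (y - x) := by
        have : x - y = (-1 : ℝ) • (y - x) := by ring_nf; module
        rw [this, N_smul hN]; simp
      simp only [add_sub_cancel] at this
      linarith [this, hxy.le]
    have h3 := N_le_coord_sum hN (y - x)
    rw [abs_sub_le_iff]
    constructor <;> [skip; skip] <;>
      · simp only [Pi.sub_apply] at h3 ⊢
        linarith
  have hb : Tendsto (fun y : Fin K → ℝ => ∑ i, |y i - x i| * N (Pi.single i 1))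
      (𝓝 x) (𝓝 0) := by
    have hcont : Continuous fun y : Fin K → ℝ => ∑ i, |y i - x i| * N (Pi.single i 1) := by
      refine continuous_finset_sum _ fun i _ => ?_
      exact (((continuous_apply i).sub continuous_const).abs).mul continuous_const
    have := hcont.tendsto x
    simpa using this
  have habs : Tendsto (fun y => |N y - N x|) (𝓝 x) (𝓝 0) :=
    squeeze_zero (fun _ => abs_nonneg _) key hb
  have hsub : Tendsto (fun y => N y - N x) (𝓝 x) (𝓝 0) := by
    rwa [tendsto_zero_iff_abs_tendsto_zero]
  have := hsub.add (tendsto_const_nhds (x := N x))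
  simpa [ContinuousAt] using this

end NormLemmas

section TLemmas
variable (hT : ∀ k, StdIF fun p => T p k)
include hT

lemma T_pos {p : Fin K → ℝ} (hp : p ∈ NonnegOrth K) (k) : 0 < T p k := (hT k).1 p hp
lemma T_mono {x y : Fin K → ℝ} (hx : x ∈ NonnegOrth K) (hy : y ∈ NonnegOrth K)
    (h : ∀ i, y i ≤ x i) (k) : T y k ≤ T x k := (hT k).2.1 x hx y hy h
lemma T_scal {x : Fin K → ℝ} (hx : x ∈ NonnegOrth K) {α : ℝ} (hα : 1 < α) (k) :
    T (α • x) k < α * T x k := (hT k).2.2 x hx α hα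

lemma T_mem_orth {p : Fin K → ℝ} (hp : p ∈ NonnegOrth K) : T p ∈ NonnegOrth K :=
  fun k => (T_pos hT hp k).le

lemma T_ne_zero (hK : 0 < K) {p : Fin K → ℝ} (hp : p ∈ NonnegOrth K) : T p ≠ 0 := by
  intro h
  have h0 := T_pos hT hp ⟨0, hK⟩
  rw [h] at h0
  simp at h0

end TLemmas

end Stmt7Aux

namespace Stmt7Aux

section Ratio

variable {K : ℕ} {N : (Fin K → ℝ) → ℝ} {T : (Fin K → ℝ) → Fin K → ℝ} {pbar : ℝ}
variable (hne : (Finset.univ : Finset (Fin K)).Nonempty)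

/-- max of coordinatewise ratios -/
noncomputable def Mx (p q : Fin K → ℝ) : ℝ := Finset.univ.sup' hne fun k => p k / q k
/-- min of coordinatewise ratios -/
noncomputable def mn (p q : Fin K → ℝ) : ℝ := Finset.univ.inf' hne fun k => p k / q k

variable {p q : Fin K → ℝ}

lemma ratio_le_Mx (k) : p k / q k ≤ Mx hne p q := by
  rw [Mx]; exact Finset.le_sup' (fun k => p k / q k) (Finset.mem_univ k)
lemma mn_le_ratio (k) : mn hne p q ≤ p k / q k := by
  rw [mn]; exact Finset.inf'_le (fun k => p k / q k) (Finset.mem_univ k)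

lemma le_Mx_mul (hq : ∀ i, 0 < q i) (k) : p k ≤ Mx hne p q * q k :=
  (div_le_iff₀ (hq k)).mp (ratio_le_Mx hne k)

lemma mn_mul_le (hq : ∀ i, 0 < q i) (k) : mn hne p q * q k ≤ p k := by
  have := mn_le_ratio hne (p := p) (q := q) k
  rw [le_div_iff₀ (hq k)] at this
  exact this

lemma Mx_pos (hp : ∀ i, 0 < p i) (hq : ∀ i, 0 < q i) : 0 < Mx hne p q := by
  have hk := hne
  obtain ⟨k, -⟩ := hk
  exact lt_of_lt_of_le (div_pos (hp k) (hq k)) (ratio_le_Mx hne k)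

lemma mn_pos (hp : ∀ i, 0 < p i) (hq : ∀ i, 0 < q i) : 0 < mn hne p q := by
  rw [mn, Finset.lt_inf'_iff]
  exact fun k _ => div_pos (hp k) (hq k)

lemma Mx_nonneg (hp : p ∈ NonnegOrth K) (hq : ∀ i, 0 < q i) : 0 ≤ Mx hne p q := by
  have hk := hne
  obtain ⟨k, -⟩ := hk
  exact le_trans (div_nonneg (hp k) (hq k).le) (ratio_le_Mx hne k)

lemma Mx_self (hp : ∀ i, 0 < p i) : Mx hne p p = 1 := by
  rw [Mx]
  have : ∀ k ∈ Finset.univ, p k / p k = (1:ℝ) := fun k _ => div_self (hp k).ne'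
  rw [Finset.sup'_congr hne rfl this]
  simp

lemma mn_self (hp : ∀ i, 0 < p i) : mn hne p p = 1 := by
  rw [mn]
  have : ∀ k ∈ Finset.univ, p k / p k = (1:ℝ) := fun k _ => div_self (hp k).ne'
  rw [Finset.inf'_congr hne rfl this]
  simp

/-- on the sphere, min ratio ≤ 1 ≤ max ratio -/
lemma ratio_bounds (hN : IsMonoNorm N) (hpbar : 0 < pbar)
    (hp : p ∈ NonnegOrth K) (hq : ∀ i, 0 < q i) (hq0 : q ∈ NonnegOrth K)
    (hNp : N p = pbar) (hNq : N q = pbar) :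
    mn hne p q ≤ 1 ∧ 1 ≤ Mx hne p q := by
  constructor
  · by_contra hm
    push_neg at hm
    have hmpos : 0 < mn hne p q := lt_trans one_pos hm
    have hle : ∀ i, q i ≤ ((mn hne p q)⁻¹ • p) i := by
      intro i
      simp only [Pi.smul_apply, smul_eq_mul]
      rw [le_inv_mul_iff₀ hmpos]
      exact mn_mul_le hne hq i
    have h1 : N q ≤ N ((mn hne p q)⁻¹ • p) := N_mono hN hq0 hle
    rw [N_smul hN, abs_of_pos (inv_pos.mpr hmpos), hNp, hNq] at h1
    rw [le_inv_mul_iff₀ hmpos] at h1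
    nlinarith
  · by_contra hM
    push_neg at hM
    have hle : ∀ i, p i ≤ (Mx hne p q • q) i := by
      intro i; simpa using le_Mx_mul hne hq i
    have h1 : N p ≤ N (Mx hne p q • q) := N_mono hN hp hle
    rw [N_smul hN, abs_of_nonneg (Mx_nonneg hne hp hq), hNp, hNq] at h1
    nlinarith [Mx_nonneg hne hp hq]

end Ratio

section Contract

variable {K : ℕ} {N : (Fin K → ℝ) → ℝ} {T : (Fin K → ℝ) → Fin K → ℝ} {pbar : ℝ}
variable (hne : (Finset.univ : Finset (Fin K)).Nonempty)

lemma mn_T_gt (hT : ∀ k, StdIF fun p => T p k) {p q : Fin K → ℝ}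
    (hp : p ∈ NonnegOrth K) (hq : q ∈ NonnegOrth K)
    (hppos : ∀ i, 0 < p i) (hqpos : ∀ i, 0 < q i)
    (hm : mn hne p q < 1) :
    mn hne p q < mn hne (T p) (T q) := by
  have hmpos : 0 < mn hne p q := mn_pos hne hppos hqpos
  have hTqpos : ∀ k, 0 < T q k := T_pos hT hq
  show mn hne p q < Finset.univ.inf' hne fun k => T p k / T q k
  rw [Finset.lt_inf'_iff]
  intro k _
  rw [lt_div_iff₀ (hTqpos k)]
  have hmem : (mn hne p q)⁻¹ • p ∈ NonnegOrth K :=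
    smul_mem_orth (by positivity) (fun i => (hppos i).le)
  have h1 : T q k ≤ T ((mn hne p q)⁻¹ • p) k := by
    refine T_mono hT hmem hq (fun i => ?_) k
    simp only [Pi.smul_apply, smul_eq_mul]
    rw [le_inv_mul_iff₀ hmpos]
    exact mn_mul_le hne hqpos i
  have h2 : T ((mn hne p q)⁻¹ • p) k < (mn hne p q)⁻¹ * T p k :=
    T_scal hT hp ((one_lt_inv₀ hmpos).mpr hm) k
  have h3 := lt_of_le_of_lt h1 h2
  have h4 := mul_lt_mul_of_pos_left h3 hmpos
  rwa [← mul_assoc, mul_inv_cancel₀ hmpos.ne', one_mul] at h4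

lemma contract (hN : IsMonoNorm N) (hT : ∀ k, StdIF fun p => T p k) (hpbar : 0 < pbar)
    {p q : Fin K → ℝ} (hp : p ∈ NonnegOrth K) (hq : q ∈ NonnegOrth K)
    (hppos : ∀ i, 0 < p i) (hqpos : ∀ i, 0 < q i)
    (hNp : N p = pbar) (hNq : N q = pbar) (hpq : p ≠ q) :
    Mx hne (T p) (T q) * mn hne p q < Mx hne p q * mn hne (T p) (T q) := by
  obtain ⟨hm1, hM1⟩ := ratio_bounds hne hN hpbar hp hqpos hq hNp hNq
  have hmpos : 0 < mn hne p q := mn_pos hne hppos hqpos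
  have hMpos : 0 < Mx hne p q := Mx_pos hne hppos hqpos
  have hTppos : ∀ k, 0 < T p k := T_pos hT hp
  have hTqpos : ∀ k, 0 < T q k := T_pos hT hq
  have hm'pos : 0 < mn hne (T p) (T q) := mn_pos hne hTppos hTqpos
  have hmM : mn hne p q < Mx hne p q := by
    rcases lt_or_ge (mn hne p q) (Mx hne p q) with h | h
    · exact h
    · exfalso
      have hM1' : Mx hne p q = 1 := le_antisymm (h.trans hm1) hM1
      have hm1' : mn hne p q = 1 := le_antisymm hm1 (hM1.trans h)
      refine hpq (funext fun k => ?_)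
      have h1 := mn_le_ratio hne (p := p) (q := q) k
      have h2 := ratio_le_Mx hne (p := p) (q := q) k
      rw [hm1'] at h1; rw [hM1'] at h2
      have h3 : p k / q k = 1 := le_antisymm h2 h1
      rwa [div_eq_one_iff_eq (hqpos k).ne'] at h3
  rcases lt_or_ge 1 (Mx hne p q) with hM | hMle
  · have hM' : Mx hne (T p) (T q) < Mx hne p q := by
      show (Finset.univ.sup' hne fun k => T p k / T q k) < Mx hne p q
      rw [Finset.sup'_lt_iff]
      intro k _
      rw [div_lt_iff₀ (hTqpos k)]
      calc T p k ≤ T (Mx hne p q • q) k := by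
            refine T_mono hT (smul_mem_orth hMpos.le hq) hp (fun i => ?_) k
            simpa using le_Mx_mul hne hqpos i
        _ < Mx hne p q * T q k := T_scal hT hq hM k
    rcases lt_or_ge (mn hne p q) 1 with hm | hmge
    · have hm' := mn_T_gt hne hT hp hq hppos hqpos hm
      calc Mx hne (T p) (T q) * mn hne p q
          < Mx hne p q * mn hne p q := by nlinarith
        _ < Mx hne p q * mn hne (T p) (T q) := by nlinarith
    · have hmeq : mn hne p q = 1 := le_antisymm hm1 hmge
      have hm' : 1 ≤ mn hne (T p) (T q) := by
        show (1:ℝ) ≤ Finset.univ.inf' hne fun k => T p k / T q k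
        rw [Finset.le_inf'_iff]
        intro k _
        rw [le_div_iff₀ (hTqpos k), one_mul]
        refine T_mono hT hp hq (fun i => ?_) k
        have := mn_mul_le (p := p) hne hqpos i
        rwa [hmeq, one_mul] at this
      rw [hmeq, mul_one]
      calc Mx hne (T p) (T q) < Mx hne p q := hM'
        _ ≤ Mx hne p q * mn hne (T p) (T q) := le_mul_of_one_le_right hMpos.le hm'
  · have hMeq : Mx hne p q = 1 := le_antisymm hMle hM1
    have hm : mn hne p q < 1 := by rw [← hMeq]; exact hmM
    have hM' : Mx hne (T p) (T q) ≤ 1 := by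
      show (Finset.univ.sup' hne fun k => T p k / T q k) ≤ 1
      rw [Finset.sup'_le_iff]
      intro k _
      rw [div_le_one (hTqpos k)]
      refine T_mono hT hq hp (fun i => ?_) k
      have := le_Mx_mul (p := p) hne hqpos i
      rwa [hMeq, one_mul] at this
    have hm' := mn_T_gt hne hT hp hq hppos hqpos hm
    rw [hMeq, one_mul]
    calc Mx hne (T p) (T q) * mn hne p q ≤ 1 * mn hne p q := by nlinarith
      _ = mn hne p q := one_mul _
      _ < mn hne (T p) (T q) := hm'

end Contract

section Yates

variable {K : ℕ} {N : (Fin K → ℝ) → ℝ} {T : (Fin K → ℝ) → Fin K → ℝ} {pbar : ℝ}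

/-- uniqueness of fixed points of `c • T` -/
lemma fix_le (hne : (Finset.univ : Finset (Fin K)).Nonempty) (hT : ∀ k, StdIF fun p => T p k) {c : ℝ} (hc : 0 < c)
    {p q : Fin K → ℝ} (hp : p ∈ NonnegOrth K) (hq : q ∈ NonnegOrth K)
    (hfp : ∀ i, p i = c * T p i) (hfq : ∀ i, q i = c * T q i) :
    ∀ i, p i ≤ q i := by
  have hppos : ∀ i, 0 < p i := fun i => (hfp i) ▸ mul_pos hc (T_pos hT hp i)
  have hqpos : ∀ i, 0 < q i := fun i => (hfq i) ▸ mul_pos hc (T_pos hT hq i)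
  have hα : Mx hne p q ≤ 1 := by
    by_contra hα
    push_neg at hα
    have hstrict : ∀ k, p k / q k < Mx hne p q := by
      intro k
      rw [div_lt_iff₀ (hqpos k)]
      calc p k = c * T p k := hfp k
        _ ≤ c * T (Mx hne p q • q) k := by
            have := T_mono hT (smul_mem_orth (le_trans zero_le_one hα.le) hq) hp
              (fun i => by simpa using le_Mx_mul (p := p) hne hqpos i) k
            nlinarith
        _ < c * (Mx hne p q * T q k) :=
            (mul_lt_mul_iff_right₀ hc).mpr (T_scal hT hq hα k)
        _ = Mx hne p q * (c * T q k) := by ring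
        _ = Mx hne p q * q k := by rw [← hfq k]
    have h2 : (Finset.univ.sup' hne fun k => p k / q k) < Mx hne p q := by
      rw [Finset.sup'_lt_iff]
      exact fun k _ => hstrict k
    exact absurd h2 (lt_irrefl _)
  intro i
  have h1 := le_Mx_mul (p := p) hne hqpos i
  nlinarith [hqpos i]

lemma fix_unique (hne : (Finset.univ : Finset (Fin K)).Nonempty) (hT : ∀ k, StdIF fun p => T p k) {c : ℝ} (hc : 0 < c)
    {p q : Fin K → ℝ} (hp : p ∈ NonnegOrth K) (hq : q ∈ NonnegOrth K)
    (hfp : ∀ i, p i = c * T p i) (hfq : ∀ i, q i = c * T q i) : p = q :=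
  funext fun i => le_antisymm (fix_le hne hT hc hp hq hfp hfq i)
    (fix_le hne hT hc hq hp hfq hfp i)

/-- existence of a fixed point of `c • T` below a feasible `q` -/
lemma fix_exists (hT : ∀ k, StdIF fun p => T p k)
    (hTc : ContinuousOn T (NonnegOrth K)) {c : ℝ} (hc : 0 < c)
    {q : Fin K → ℝ} (hq : q ∈ NonnegOrth K) (hfeas : ∀ i, c * T q i ≤ q i) :
    ∃ p, p ∈ NonnegOrth K ∧ (∀ i, p i = c * T p i) ∧ ∀ i, p i ≤ q i := by
  set F : (Fin K → ℝ) → Fin K → ℝ := fun y => c • T y with hF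
  set x : ℕ → Fin K → ℝ := fun n => F^[n] q with hx
  have hstep : ∀ n, x (n + 1) = c • T (x n) := by
    intro n
    simp only [hx, Function.iterate_succ_apply', hF]
  have hx0 : x 0 = q := rfl
  have hinv : ∀ n, x n ∈ NonnegOrth K ∧ ∀ i, x (n + 1) i ≤ x n i := by
    intro n
    induction n with
    | zero =>
        refine ⟨hq, fun i => ?_⟩
        rw [hstep 0, hx0]
        simpa using hfeas i
    | succ n ih =>
        obtain ⟨hmem, hdec⟩ := ih
        have hmem' : x (n + 1) ∈ NonnegOrth K := by
          rw [hstep n]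
          exact fun i => mul_nonneg hc.le (T_pos hT hmem i).le
        refine ⟨hmem', fun i => ?_⟩
        have e1 : x (n + 1 + 1) = c • T (x (n + 1)) := hstep (n + 1)
        rw [e1]
        calc (c • T (x (n + 1))) i = c * T (x (n + 1)) i := rfl
          _ ≤ c * T (x n) i := mul_le_mul_of_nonneg_left (T_mono hT hmem hmem' hdec i) hc.le
          _ = x (n + 1) i := (congrFun (hstep n) i).symm
  have hanti : ∀ i, Antitone fun n => x n i :=
    fun i => antitone_nat_of_succ_le fun n => (hinv n).2 i
  have hbdd : ∀ i, BddBelow (Set.range fun n => x n i) :=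
    fun i => ⟨0, fun y ⟨n, hn⟩ => hn ▸ (hinv n).1 i⟩
  set p : Fin K → ℝ := fun i => ⨅ n, x n i with hpdef
  have htend : ∀ i, Tendsto (fun n => x n i) atTop (𝓝 (p i)) :=
    fun i => tendsto_atTop_ciInf (hanti i) (hbdd i)
  have hxt : Tendsto x atTop (𝓝 p) := tendsto_pi_nhds.mpr htend
  have hp_orth : p ∈ NonnegOrth K :=
    fun i => le_ciInf fun n => (hinv n).1 i
  have hple : ∀ i, p i ≤ q i := fun i => by
    have := ciInf_le (hbdd i) 0
    rwa [hx0] at this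
  have hxtW : Tendsto x atTop (𝓝[NonnegOrth K] p) :=
    tendsto_nhdsWithin_iff.mpr ⟨hxt, Filter.Eventually.of_forall fun n => (hinv n).1⟩
  have hTt : Tendsto (fun n => c • T (x n)) atTop (𝓝 (c • T p)) :=
    (Filter.Tendsto.comp (hTc p hp_orth) hxtW).const_smul c
  have hshift : Tendsto (fun n => x (n + 1)) atTop (𝓝 p) :=
    hxt.comp (tendsto_add_atTop_nat 1)
  have heq : p = c • T p := by
    refine tendsto_nhds_unique hshift ?_
    simpa only [hstep] using hTt
  exact ⟨p, hp_orth, fun i => congrFun heq i, hple⟩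

end Yates

section Cont

lemma continuous_finset_sup' {ι X : Type*} [TopologicalSpace X] {s : Finset ι}
    (hs : s.Nonempty) {f : ι → X → ℝ} (hf : ∀ i, Continuous (f i)) :
    Continuous fun x => s.sup' hs fun i => f i x := by
  rw [continuous_iff_continuousAt]
  intro x
  exact Filter.Tendsto.finset_sup'_nhds_apply hs fun i _ => (hf i).tendsto x

lemma continuous_finset_inf' {ι X : Type*} [TopologicalSpace X] {s : Finset ι}
    (hs : s.Nonempty) {f : ι → X → ℝ} (hf : ∀ i, Continuous (f i)) :
    Continuous fun x => s.inf' hs fun i => f i x := by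
  rw [continuous_iff_continuousAt]
  intro x
  exact Filter.Tendsto.finset_inf'_nhds_apply hs fun i _ => (hf i).tendsto x

lemma continuous_Mx {K : ℕ} (hne : (Finset.univ : Finset (Fin K)).Nonempty)
    (q : Fin K → ℝ) : Continuous fun p => Mx hne p q :=
  continuous_finset_sup' hne fun k => (continuous_apply k).div_const _

lemma continuous_mn {K : ℕ} (hne : (Finset.univ : Finset (Fin K)).Nonempty)
    (q : Fin K → ℝ) : Continuous fun p => mn hne p q :=
  continuous_finset_inf' hne fun k => (continuous_apply k).div_const _

end Cont

section Exists

variable {K : ℕ} {N : (Fin K → ℝ) → ℝ} {T : (Fin K → ℝ) → Fin K → ℝ} {pbar : ℝ}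

lemma single_mem_orth (i : Fin K) : (Pi.single i 1 : Fin K → ℝ) ∈ NonnegOrth K := by
  intro j
  rw [Pi.single_apply]
  split <;> norm_num

lemma Nsingle_pos (hN : IsMonoNorm N) (i : Fin K) : 0 < N (Pi.single i 1) := by
  refine N_pos hN ?_
  intro h
  have := congrFun h i
  simp at this

lemma coord_le (hN : IsMonoNorm N) {x : Fin K → ℝ} (hx : x ∈ NonnegOrth K)
    (h : N x ≤ pbar) (i : Fin K) : x i * N (Pi.single i 1) ≤ pbar := by
  have hle : ∀ j, (x i • (Pi.single i 1 : Fin K → ℝ)) j ≤ x j := by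
    intro j
    by_cases hji : j = i
    · subst hji; simp
    · simp [Pi.single_apply, hji, hx j]
  have hmem : x i • (Pi.single i 1 : Fin K → ℝ) ∈ NonnegOrth K :=
    smul_mem_orth (hx i) (single_mem_orth i)
  have h2 := N_mono hN hmem hle
  rw [N_smul hN, abs_of_nonneg (hx i)] at h2
  linarith

lemma exists_eigen (hK : 0 < K) (hN : IsMonoNorm N) (hpbar : 0 < pbar)
    (hT : ∀ k, StdIF fun p => T p k) (hTc : ContinuousOn T (NonnegOrth K)) :
    ∃ cstar pstar, 0 < cstar ∧ pstar ∈ NonnegOrth K ∧ (∀ i, 0 < pstar i) ∧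
      (∀ i, pstar i = cstar * T pstar i) ∧ N pstar = pbar ∧
      ∀ c' p', 0 < c' → p' ∈ NonnegOrth K → (∀ i, c' * T p' i ≤ p' i) →
        N p' ≤ pbar → c' ≤ cstar := by
  haveI : Nonempty (Fin K) := ⟨⟨0, hK⟩⟩
  have hne : (Finset.univ : Finset (Fin K)).Nonempty := Finset.univ_nonempty
  set A : Set ℝ :=
    {c | 0 < c ∧ ∃ q, q ∈ NonnegOrth K ∧ (∀ i, c * T q i ≤ q i) ∧ N q ≤ pbar} with hA
  -- A is nonempty
  set one : Fin K → ℝ := fun _ => 1 with hone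
  have hone_orth : one ∈ NonnegOrth K := fun _ => zero_le_one
  have hone_ne : one ≠ 0 := by
    intro h; have := congrFun h ⟨0, hK⟩; simp [hone] at this
  have hNone : 0 < N one := N_pos hN hone_ne
  set q0 : Fin K → ℝ := (pbar / N one) • one with hq0def
  have hq0pos : ∀ i, 0 < q0 i := fun i => by
    simp only [hq0def, Pi.smul_apply, smul_eq_mul, hone]
    positivity
  have hq0_orth : q0 ∈ NonnegOrth K := fun i => (hq0pos i).le
  have hNq0 : N q0 = pbar := by
    rw [hq0def, N_smul hN, abs_of_pos (by positivity), div_mul_cancel₀ _ hNone.ne']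
  have hTq0pos : ∀ k, 0 < T q0 k := T_pos hT hq0_orth
  set c0 : ℝ := Finset.univ.inf' hne fun k => q0 k / T q0 k with hc0def
  have hc0pos : 0 < c0 := by
    rw [hc0def, Finset.lt_inf'_iff]
    exact fun k _ => div_pos (hq0pos k) (hTq0pos k)
  have hc0A : c0 ∈ A := by
    refine ⟨hc0pos, q0, hq0_orth, fun i => ?_, hNq0.le⟩
    have h1 : c0 ≤ q0 i / T q0 i := by
      rw [hc0def]; exact Finset.inf'_le (fun k => q0 k / T q0 k) (Finset.mem_univ i)
    rw [le_div_iff₀ (hTq0pos i)] at h1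
    nlinarith [hTq0pos i]
  -- A is bounded above
  have h0orth : (0 : Fin K → ℝ) ∈ NonnegOrth K := fun _ => le_refl 0
  have hT0pos : ∀ k, 0 < T 0 k := T_pos hT h0orth
  have hNT0 : 0 < N (T 0) := N_pos hN (T_ne_zero hT hK h0orth)
  have hbddA : BddAbove A := by
    refine ⟨pbar / N (T 0), fun c hc => ?_⟩
    obtain ⟨hcpos, q, hq_orth, hfe, hNq⟩ := hc
    have h1 : ∀ i, c * T 0 i ≤ q i := fun i =>
      le_trans (mul_le_mul_of_nonneg_left
        (T_mono hT hq_orth h0orth (fun j => hq_orth j) i) hcpos.le) (hfe i)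
    have h2 : N (c • T 0) ≤ N q :=
      N_mono hN (smul_mem_orth hcpos.le (fun k => (hT0pos k).le)) (fun i => h1 i)
    rw [N_smul hN, abs_of_pos hcpos] at h2
    rw [le_div_iff₀ hNT0]
    linarith
  set cstar := sSup A with hcsdef
  have hcs_pos : 0 < cstar := lt_of_lt_of_le hc0pos (le_csSup hbddA hc0A)
  have hdown : ∀ c, 0 < c → c < cstar → c ∈ A := by
    intro c hcpos hclt
    obtain ⟨a, haA, hca⟩ := exists_lt_of_lt_csSup ⟨c0, hc0A⟩ hclt
    obtain ⟨hapos, q, hq_orth, hfe, hNq⟩ := haA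
    exact ⟨hcpos, q, hq_orth, fun i => le_trans
      (mul_le_mul_of_nonneg_right hca.le (T_pos hT hq_orth i).le) (hfe i), hNq⟩
  -- monotone sequence of eigenvalue approximations
  set cseq : ℕ → ℝ := fun n => cstar * (1 - 1 / ((n : ℝ) + 2)) with hcseqdef
  have hfrac : ∀ n : ℕ, 0 < 1 - 1 / ((n : ℝ) + 2) ∧ 1 - 1 / ((n : ℝ) + 2) < 1 := by
    intro n
    have h2 : (0:ℝ) < (n : ℝ) + 2 := by positivity
    constructor
    · have : 1 / ((n:ℝ) + 2) < 1 := by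
        rw [div_lt_one h2]; linarith
      linarith
    · have : 0 < 1 / ((n:ℝ) + 2) := by positivity
      linarith
  have hcseq_pos : ∀ n, 0 < cseq n := fun n => mul_pos hcs_pos (hfrac n).1
  have hcseq_lt : ∀ n, cseq n < cstar := fun n => by
    have h := (hfrac n).2
    have h' := (hfrac n).1
    have he : cseq n = cstar * (1 - 1 / ((n:ℝ) + 2)) := rfl
    nlinarith
  have hcseq_mono : ∀ n, cseq n ≤ cseq (n + 1) := by
    intro n
    have h1 : (1:ℝ) / ((n:ℝ) + 1 + 2) ≤ 1 / ((n:ℝ) + 2) := by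
      apply one_div_le_one_div_of_le
      · positivity
      · linarith
    have h2 : (1:ℝ) - 1/((n:ℝ)+2) ≤ 1 - 1/(((n:ℝ)+1)+2) := by linarith
    have he1 : cseq n = cstar * (1 - 1 / ((n:ℝ) + 2)) := rfl
    have he2 : cseq (n + 1) = cstar * (1 - 1 / (((n:ℝ) + 1) + 2)) := by
      show cstar * (1 - 1 / ((((n:ℕ)+1 : ℕ) : ℝ) + 2)) = _
      push_cast
      ring
    rw [he1, he2]
    nlinarith
  have hcseq_tend : Tendsto cseq atTop (𝓝 cstar) := by
    have h1 : Tendsto (fun n : ℕ => 1 / ((n:ℝ) + 2)) atTop (𝓝 0) := by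
      apply Tendsto.comp (tendsto_inv_atTop_zero) ?_ |>.congr (fun n => by rw [Function.comp, one_div])
      exact tendsto_atTop_add_const_right atTop 2 tendsto_natCast_atTop_atTop
    have h2 := ((tendsto_const_nhds (x := (1:ℝ))).sub h1).const_mul cstar
    simp only [sub_zero, mul_one] at h2
    exact h2
  -- fixed points of `cseq n • T`
  have hpn : ∀ n, ∃ pp, pp ∈ NonnegOrth K ∧ (∀ i, pp i = cseq n * T pp i) ∧ N pp ≤ pbar := by
    intro n
    obtain ⟨hpos, q, hq_orth, hfe, hNq⟩ := hdown _ (hcseq_pos n) (hcseq_lt n)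
    obtain ⟨pp, hp_orth, hfixed, hple⟩ := fix_exists hT hTc hpos hq_orth hfe
    exact ⟨pp, hp_orth, hfixed, le_trans (N_mono hN hp_orth hple) hNq⟩
  choose p hp_orth hp_fix hp_Nle using hpn
  have hp_pos : ∀ n i, 0 < p n i := fun n i =>
    (hp_fix n i) ▸ mul_pos (hcseq_pos n) (T_pos hT (hp_orth n) i)
  have hp_mono : ∀ n i, p n i ≤ p (n + 1) i := by
    intro n
    have hfe : ∀ i, cseq n * T (p (n + 1)) i ≤ p (n + 1) i := fun i =>
      le_trans (mul_le_mul_of_nonneg_right (hcseq_mono n)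
        (T_pos hT (hp_orth (n + 1)) i).le) (hp_fix (n + 1) i).ge
    obtain ⟨p', hp'_orth, hfix', hple'⟩ := fix_exists hT hTc (hcseq_pos n) (hp_orth (n + 1)) hfe
    have hpe : p' = p n := fix_unique hne hT (hcseq_pos n) hp'_orth (hp_orth n) hfix' (hp_fix n)
    exact fun i => hpe ▸ hple' i
  have hp_mono' : ∀ i, Monotone fun n => p n i :=
    fun i => monotone_nat_of_le_succ fun n => hp_mono n i
  have hp_bdd : ∀ i, BddAbove (Set.range fun n => p n i) := by
    intro i
    refine ⟨pbar / N (Pi.single i 1), ?_⟩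
    rintro y ⟨n, rfl⟩
    have h1 := coord_le hN (hp_orth n) (hp_Nle n) i
    rw [le_div_iff₀ (Nsingle_pos hN i)]
    exact h1
  set pstar : Fin K → ℝ := fun i => ⨆ n, p n i with hpsdef
  have htend : ∀ i, Tendsto (fun n => p n i) atTop (𝓝 (pstar i)) :=
    fun i => tendsto_atTop_ciSup (hp_mono' i) (hp_bdd i)
  have hpt : Tendsto p atTop (𝓝 pstar) := tendsto_pi_nhds.mpr htend
  have hps_orth : pstar ∈ NonnegOrth K :=
    fun i => le_trans (hp_pos 0 i).le (le_ciSup (hp_bdd i) 0)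
  have hptW : Tendsto p atTop (𝓝[NonnegOrth K] pstar) :=
    tendsto_nhdsWithin_iff.mpr ⟨hpt, .of_forall hp_orth⟩
  have hTt : Tendsto (fun n => cseq n • T (p n)) atTop (𝓝 (cstar • T pstar)) :=
    Tendsto.smul hcseq_tend (Filter.Tendsto.comp (hTc pstar hps_orth) hptW)
  have heq : pstar = cstar • T pstar := by
    have he : (fun n => cseq n • T (p n)) = p :=
      funext fun n => funext fun i => (hp_fix n i).symm
    rw [he] at hTt
    exact tendsto_nhds_unique hpt hTt
  have hfix_star : ∀ i, pstar i = cstar * T pstar i := fun i => congrFun heq i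
  have hps_pos : ∀ i, 0 < pstar i := fun i =>
    hfix_star i ▸ mul_pos hcs_pos (T_pos hT hps_orth i)
  have hNps_le : N pstar ≤ pbar :=
    le_of_tendsto ((N_cont hN).continuousAt.tendsto.comp hpt) (.of_forall hp_Nle)
  have hmax : ∀ c' p', 0 < c' → p' ∈ NonnegOrth K → (∀ i, c' * T p' i ≤ p' i) →
      N p' ≤ pbar → c' ≤ cstar :=
    fun c' p' h1 h2 h3 h4 => le_csSup hbddA ⟨h1, p', h2, h3, h4⟩
  have hNps : N pstar = pbar := by
    rcases eq_or_lt_of_le hNps_le with h | h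
    · exact h
    exfalso
    have hps_ne : pstar ≠ 0 := by
      intro h0
      have := hps_pos ⟨0, hK⟩
      rw [h0] at this
      simp at this
    have hNpspos : 0 < N pstar := N_pos hN hps_ne
    set lam := pbar / N pstar with hlamdef
    have hlampos : 0 < lam := by positivity
    have hlam1 : 1 < lam := by rw [hlamdef, lt_div_iff₀ hNpspos]; linarith
    set q' := lam • pstar with hq'def
    have hq'pos : ∀ i, 0 < q' i := fun i => mul_pos hlampos (hps_pos i)
    have hq'orth : q' ∈ NonnegOrth K := fun i => (hq'pos i).le
    have hNq' : N q' = pbar := by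
      rw [hq'def, N_smul hN, abs_of_pos hlampos, hlamdef, div_mul_cancel₀ _ hNpspos.ne']
    have hstrict : ∀ k, cstar * T q' k < q' k := by
      intro k
      have h1 : T q' k < lam * T pstar k := T_scal hT hps_orth hlam1 k
      calc cstar * T q' k < cstar * (lam * T pstar k) := (mul_lt_mul_iff_right₀ hcs_pos).mpr h1
        _ = lam * (cstar * T pstar k) := by ring
        _ = lam * pstar k := by rw [← hfix_star k]
        _ = q' k := rfl
    set mu := Finset.univ.sup' hne (fun k => cstar * T q' k / q' k) with hmudef
    have hmupos : 0 < mu := by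
      have h1 : 0 < cstar * T q' ⟨0, hK⟩ / q' ⟨0, hK⟩ :=
        div_pos (mul_pos hcs_pos (T_pos hT hq'orth ⟨0, hK⟩)) (hq'pos ⟨0, hK⟩)
      have h2 : cstar * T q' ⟨0, hK⟩ / q' ⟨0, hK⟩ ≤ mu := by
        rw [hmudef]
        exact Finset.le_sup' (fun k => cstar * T q' k / q' k) (Finset.mem_univ ⟨0, hK⟩)
      linarith
    have hmu1 : mu < 1 := by
      rw [hmudef, Finset.sup'_lt_iff]
      intro k _
      rw [div_lt_one (hq'pos k)]
      exact hstrict k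
    have hc'gt : cstar < cstar / mu := by
      rw [lt_div_iff₀ hmupos]
      nlinarith
    have hc'le : cstar / mu ≤ cstar := by
      refine hmax (cstar / mu) q' (by positivity) hq'orth (fun i => ?_) hNq'.le
      rw [div_mul_eq_mul_div, div_le_iff₀ hmupos]
      have h3 : cstar * T q' i / q' i ≤ mu := by
        rw [hmudef]
        exact Finset.le_sup' (fun k => cstar * T q' k / q' k) (Finset.mem_univ i)
      rw [div_le_iff₀ (hq'pos i)] at h3
      nlinarith
    linarith
  exact ⟨cstar, pstar, hcs_pos, hps_orth, hps_pos, hfix_star, hNps, hmax⟩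

end Exists

section Norml

variable {K : ℕ} {N : (Fin K → ℝ) → ℝ} {T Ttil : (Fin K → ℝ) → Fin K → ℝ} {pbar : ℝ}

lemma NT_pos (hK : 0 < K) (hN : IsMonoNorm N) (hT : ∀ k, StdIF fun p => T p k)
    {p : Fin K → ℝ} (hp : p ∈ NonnegOrth K) : 0 < N (T p) :=
  N_pos hN (T_ne_zero hT hK hp)

lemma Tt_basic (hK : 0 < K) (hN : IsMonoNorm N) (hpbar : 0 < pbar)
    (hT : ∀ k, StdIF fun p => T p k)
    (hTtil : ∀ p, Ttil p = (pbar / N (T p)) • T p)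
    {p : Fin K → ℝ} (hp : p ∈ NonnegOrth K) :
    (∀ i, 0 < Ttil p i) ∧ Ttil p ∈ NonnegOrth K ∧ N (Ttil p) = pbar := by
  have hNTp : 0 < N (T p) := NT_pos hK hN hT hp
  have hlam : 0 < pbar / N (T p) := by positivity
  have hpos : ∀ i, 0 < Ttil p i := by
    intro i
    rw [hTtil p]
    exact mul_pos hlam (T_pos hT hp i)
  refine ⟨hpos, fun i => (hpos i).le, ?_⟩
  rw [hTtil p, N_smul hN, abs_of_pos hlam, div_mul_cancel₀ _ hNTp.ne']

lemma Tt_contOn (hK : 0 < K) (hN : IsMonoNorm N) (hT : ∀ k, StdIF fun p => T p k)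
    (hTc : ContinuousOn T (NonnegOrth K))
    (hTtil : ∀ p, Ttil p = (pbar / N (T p)) • T p) :
    ContinuousOn Ttil (NonnegOrth K) := by
  have h1 : ContinuousOn (fun p => (pbar / N (T p)) • T p) (NonnegOrth K) := by
    refine ContinuousOn.fun_smul ?_ hTc
    exact continuousOn_const.div ((N_cont hN).comp_continuousOn hTc)
      (fun p hp => (NT_pos hK hN hT hp).ne')
  have : Ttil = fun p => (pbar / N (T p)) • T p := funext hTtil
  rwa [this]

lemma contract' (hne : (Finset.univ : Finset (Fin K)).Nonempty)
    (hK : 0 < K) (hN : IsMonoNorm N) (hpbar : 0 < pbar)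
    (hT : ∀ k, StdIF fun p => T p k)
    (hTtil : ∀ p, Ttil p = (pbar / N (T p)) • T p)
    {pstar : Fin K → ℝ} (hps_orth : pstar ∈ NonnegOrth K) (hps_pos : ∀ i, 0 < pstar i)
    (hNps : N pstar = pbar) (hfixstar : Ttil pstar = pstar)
    {p : Fin K → ℝ} (hp : p ∈ NonnegOrth K) (hppos : ∀ i, 0 < p i)
    (hNp : N p = pbar) (hpne : p ≠ pstar) :
    Mx hne (Ttil p) pstar * mn hne p pstar < Mx hne p pstar * mn hne (Ttil p) pstar := by
  have hNTp : 0 < N (T p) := NT_pos hK hN hT hp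
  have hNTps : 0 < N (T pstar) := NT_pos hK hN hT hps_orth
  set lam := pbar / N (T p) with hlamdef
  set lams := pbar / N (T pstar) with hlamsdef
  have hlam : 0 < lam := by rw [hlamdef]; positivity
  have hlams : 0 < lams := by rw [hlamsdef]; positivity
  set c := lam / lams with hcdef
  have hc : 0 < c := by rw [hcdef]; positivity
  have hTtp : ∀ k, Ttil p k = lam * T p k := fun k => by rw [hTtil p]; rfl
  have hTtps : ∀ k, pstar k = lams * T pstar k := fun k => by
    conv_lhs => rw [← hfixstar]
    rw [hTtil pstar]; rfl
  have hTpspos : ∀ k, 0 < T pstar k := T_pos hT hps_orth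
  have hratio : ∀ k, Ttil p k / pstar k = c * (T p k / T pstar k) := by
    intro k
    rw [hTtp k, hTtps k, hcdef]
    rw [mul_div_mul_comm]
  have hgsup : ∀ x y : ℝ, c * max x y = max (c * x) (c * y) :=
    fun x y => mul_max_of_nonneg x y hc.le
  have hginf : ∀ x y : ℝ, c * min x y = min (c * x) (c * y) :=
    fun x y => mul_min_of_nonneg x y hc.le
  have hMxeq : Mx hne (Ttil p) pstar = c * Mx hne (T p) (T pstar) := by
    show (Finset.univ.sup' hne fun k => Ttil p k / pstar k) = _
    rw [Finset.sup'_congr hne rfl (fun k _ => hratio k)]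
    exact (Finset.comp_sup'_eq_sup'_comp hne (fun t => c * t) hgsup).symm
  have hmneq : mn hne (Ttil p) pstar = c * mn hne (T p) (T pstar) := by
    show (Finset.univ.inf' hne fun k => Ttil p k / pstar k) = _
    rw [Finset.inf'_congr hne rfl (fun k _ => hratio k)]
    exact (Finset.apply_inf'_eq_inf'_comp hne (fun t => c * t) hginf).symm
  have hcore := contract hne hN hT hpbar hp hps_orth hppos hps_pos hNp hNps hpne
  calc Mx hne (Ttil p) pstar * mn hne p pstar
      = c * (Mx hne (T p) (T pstar) * mn hne p pstar) := by rw [hMxeq]; ring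
    _ < c * (Mx hne p pstar * mn hne (T p) (T pstar)) := (mul_lt_mul_iff_right₀ hc).mpr hcore
    _ = Mx hne p pstar * mn hne (Ttil p) pstar := by rw [hmneq]; ring

end Norml

section Conv

variable {K : ℕ} {N : (Fin K → ℝ) → ℝ} {T Ttil : (Fin K → ℝ) → Fin K → ℝ} {pbar : ℝ}

lemma converge (hK : 0 < K) (hN : IsMonoNorm N) (hpbar : 0 < pbar)
    (hT : ∀ k, StdIF fun p => T p k) (hTc : ContinuousOn T (NonnegOrth K))
    (hTtil : ∀ p, Ttil p = (pbar / N (T p)) • T p)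
    {pstar : Fin K → ℝ} (hps_orth : pstar ∈ NonnegOrth K) (hps_pos : ∀ i, 0 < pstar i)
    (hNps : N pstar = pbar) (hfixstar : Ttil pstar = pstar)
    {p1 : Fin K → ℝ} (hp1 : p1 ∈ NonnegOrth K) :
    Tendsto (fun n => Ttil^[n] p1) atTop (𝓝 pstar) := by
  haveI : Nonempty (Fin K) := ⟨⟨0, hK⟩⟩
  have hne : (Finset.univ : Finset (Fin K)).Nonempty := Finset.univ_nonempty
  set s : ℕ → Fin K → ℝ := fun n => Ttil^[n] (Ttil p1) with hsdef
  have hstep : ∀ n, s (n + 1) = Ttil (s n) := fun n => Function.iterate_succ_apply' _ _ _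
  have hbasic : ∀ n, s n ∈ NonnegOrth K ∧ (∀ i, 0 < s n i) ∧ N (s n) = pbar := by
    intro n
    induction n with
    | zero =>
        obtain ⟨h1, h2, h3⟩ := Tt_basic hK hN hpbar hT hTtil hp1
        exact ⟨h2, h1, h3⟩
    | succ n ih =>
        rw [hstep n]
        obtain ⟨h1, h2, h3⟩ := Tt_basic hK hN hpbar hT hTtil ih.1
        exact ⟨h2, h1, h3⟩
  set Ms : ℕ → ℝ := fun n => Mx hne (s n) pstar with hMsdef
  set ms : ℕ → ℝ := fun n => mn hne (s n) pstar with hmsdef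
  have hms_pos : ∀ n, 0 < ms n := fun n => mn_pos hne (hbasic n).2.1 hps_pos
  have hMs_pos : ∀ n, 0 < Ms n := fun n => Mx_pos hne (hbasic n).2.1 hps_pos
  have hbounds : ∀ n, ms n ≤ 1 ∧ 1 ≤ Ms n := fun n =>
    ratio_bounds hne hN hpbar (hbasic n).1 hps_pos hps_orth (hbasic n).2.2 hNps
  set R : ℕ → ℝ := fun n => Ms n / ms n with hRdef
  have hR1 : ∀ n, 1 ≤ R n := fun n =>
    (one_le_div (hms_pos n)).mpr ((hbounds n).1.trans (hbounds n).2)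
  have hRpos : ∀ n, 0 < R n := fun n => lt_of_lt_of_le one_pos (hR1 n)
  have hRstep : ∀ n, R (n + 1) ≤ R n := by
    intro n
    rcases eq_or_ne (s n) pstar with he | hne'
    · have h1 : s (n + 1) = pstar := by rw [hstep n, he, hfixstar]
      have : R (n + 1) = 1 := by
        show Ms (n+1) / ms (n+1) = 1
        show Mx hne (s (n+1)) pstar / mn hne (s (n+1)) pstar = 1
        rw [h1, Mx_self hne hps_pos, mn_self hne hps_pos]
        norm_num
      rw [this]
      exact hR1 n
    · have hcore := contract' hne hK hN hpbar hT hTtil hps_orth hps_pos hNps hfixstar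
        (hbasic n).1 (hbasic n).2.1 (hbasic n).2.2 hne'
      rw [← hstep n] at hcore
      show Ms (n+1) / ms (n+1) ≤ Ms n / ms n
      rw [div_le_div_iff₀ (hms_pos (n+1)) (hms_pos n)]
      nlinarith [hcore]
  have hRanti : Antitone R := antitone_nat_of_succ_le hRstep
  have hRbdd : BddBelow (Set.range R) := ⟨1, by rintro y ⟨n, rfl⟩; exact hR1 n⟩
  set L := ⨅ n, R n with hLdef
  have hRL : Tendsto R atTop (𝓝 L) := tendsto_atTop_ciInf hRanti hRbdd
  have hL1 : 1 ≤ L := le_ciInf hR1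
  set C := R 0 with hCdef
  have hRC : ∀ n, R n ≤ C := fun n => hRanti (Nat.zero_le n)
  have hC1 : 1 ≤ C := hR1 0
  have hCpos : 0 < C := lt_of_lt_of_le one_pos hC1
  have hMsle : ∀ n, Ms n ≤ R n * ms n := by
    intro n
    rw [hRdef]
    show Ms n ≤ Ms n / ms n * ms n
    rw [div_mul_cancel₀ _ (hms_pos n).ne']
  have hbox : ∀ n i, s n i ∈ Set.Icc (pstar i / C) (C * pstar i) := by
    intro n i
    have h1 : 1 ≤ C * ms n := by
      have := hMsle n
      have h2 := (hbounds n).2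
      nlinarith [hms_pos n, hRC n, hRpos n]
    constructor
    · have h3 : ms n * pstar i ≤ s n i := mn_mul_le hne hps_pos i
      rw [div_le_iff₀ hCpos]
      nlinarith [hps_pos i]
    · have h4 : s n i ≤ Ms n * pstar i := le_Mx_mul hne hps_pos i
      have h5 : Ms n ≤ C := by
        have := hMsle n
        have h6 := (hbounds n).1
        nlinarith [hRC n, hRpos n, hms_pos n]
      nlinarith [hps_pos i]
  set S : Set (Fin K → ℝ) :=
    (Set.pi Set.univ fun i => Set.Icc (pstar i / C) (C * pstar i)) ∩ {x | N x = pbar}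
    with hSdef
  have hScomp : IsCompact S := by
    refine IsCompact.inter_right (isCompact_univ_pi fun i => isCompact_Icc) ?_
    have : {x : Fin K → ℝ | N x = pbar} = N ⁻¹' {pbar} := rfl
    rw [this]
    exact (isClosed_singleton).preimage (N_cont hN)
  have hsS : ∀ n, s n ∈ S := fun n =>
    ⟨Set.mem_univ_pi.mpr fun i => hbox n i, (hbasic n).2.2⟩
  obtain ⟨q, hqS, φ, hφmono, hφtend⟩ := hScomp.tendsto_subseq hsS
  have hq_pos : ∀ i, 0 < q i := by
    intro i
    have h1 := (Set.mem_univ_pi.mp hqS.1 i).1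
    have : 0 < pstar i / C := div_pos (hps_pos i) hCpos
    linarith
  have hq_orth : q ∈ NonnegOrth K := fun i => (hq_pos i).le
  have hNq : N q = pbar := hqS.2
  -- limits of ratios along the subsequence
  have hmn_q_pos : 0 < mn hne q pstar := mn_pos hne hq_pos hps_pos
  have hMR : Tendsto (fun j => R (φ j)) atTop (𝓝 (Mx hne q pstar / mn hne q pstar)) := by
    refine Tendsto.div ?_ ?_ hmn_q_pos.ne'
    · exact (((continuous_Mx hne pstar).tendsto q).comp hφtend)
    · exact (((continuous_mn hne pstar).tendsto q).comp hφtend)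
  have hML : Tendsto (fun j => R (φ j)) atTop (𝓝 L) := hRL.comp hφmono.tendsto_atTop
  have hLq : Mx hne q pstar / mn hne q pstar = L := tendsto_nhds_unique hMR hML
  -- the subsequence image under Ttil
  have hφtendW : Tendsto (fun j => s (φ j)) atTop (𝓝[NonnegOrth K] q) :=
    tendsto_nhdsWithin_iff.mpr ⟨hφtend, .of_forall fun j => (hbasic (φ j)).1⟩
  have hTtq : Tendsto (fun j => s (φ j + 1)) atTop (𝓝 (Ttil q)) := by
    have h1 : Tendsto (fun j => Ttil (s (φ j))) atTop (𝓝 (Ttil q)) :=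
      Filter.Tendsto.comp (Tt_contOn hK hN hT hTc hTtil q hq_orth) hφtendW
    refine h1.congr fun j => (hstep (φ j)).symm
  have hTtq_pos : ∀ i, 0 < Ttil q i := (Tt_basic hK hN hpbar hT hTtil hq_orth).1
  have hmn_Ttq_pos : 0 < mn hne (Ttil q) pstar := mn_pos hne hTtq_pos hps_pos
  have hφ1 : Tendsto (fun j => φ j + 1) atTop atTop :=
    tendsto_atTop_mono (fun j => Nat.le_succ_of_le hφmono.le_apply) tendsto_id
  have hML' : Tendsto (fun j => R (φ j + 1)) atTop (𝓝 L) := hRL.comp hφ1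
  have hMR' : Tendsto (fun j => R (φ j + 1)) atTop
      (𝓝 (Mx hne (Ttil q) pstar / mn hne (Ttil q) pstar)) := by
    refine Tendsto.div ?_ ?_ hmn_Ttq_pos.ne'
    · exact (((continuous_Mx hne pstar).tendsto (Ttil q)).comp hTtq)
    · exact (((continuous_mn hne pstar).tendsto (Ttil q)).comp hTtq)
  have hLq' : Mx hne (Ttil q) pstar / mn hne (Ttil q) pstar = L :=
    tendsto_nhds_unique hMR' hML'
  -- conclude q = pstar, L = 1
  have hqps : q = pstar := by
    by_contra hne'
    have hcore := contract' hne hK hN hpbar hT hTtil hps_orth hps_pos hNps hfixstar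
      hq_orth hq_pos hNq hne'
    have h2 : Mx hne (Ttil q) pstar / mn hne (Ttil q) pstar
        < Mx hne q pstar / mn hne q pstar := by
      rw [div_lt_div_iff₀ hmn_Ttq_pos hmn_q_pos]
      nlinarith [hcore]
    rw [hLq, hLq'] at h2
    exact lt_irrefl _ h2
  have hLeq : L = 1 := by
    rw [← hLq, hqps, Mx_self hne hps_pos, mn_self hne hps_pos]
    norm_num
  rw [hLeq] at hRL
  -- squeeze the max and min ratios to 1
  have hMs_to : Tendsto Ms atTop (𝓝 1) := by
    refine tendsto_of_tendsto_of_tendsto_of_le_of_le tendsto_const_nhds hRL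
      (fun n => (hbounds n).2) (fun n => ?_)
    have := hMsle n
    have h6 := (hbounds n).1
    nlinarith [hRpos n, hms_pos n]
  have hms_to : Tendsto ms atTop (𝓝 1) := by
    have hinv : Tendsto (fun n => (R n)⁻¹) atTop (𝓝 1) := by
      have := hRL.inv₀ one_ne_zero
      simpa using this
    refine tendsto_of_tendsto_of_tendsto_of_le_of_le hinv tendsto_const_nhds
      (fun n => ?_) (fun n => (hbounds n).1)
    rw [inv_le_iff_one_le_mul₀ (hRpos n)]
    have := hMsle n
    have h6 := (hbounds n).2
    nlinarith [hms_pos n]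
  have hs_tend : Tendsto s atTop (𝓝 pstar) := by
    rw [tendsto_pi_nhds]
    intro i
    have hlow : Tendsto (fun n => ms n * pstar i) atTop (𝓝 (pstar i)) := by
      have := hms_to.mul_const (pstar i)
      simpa using this
    have hhigh : Tendsto (fun n => Ms n * pstar i) atTop (𝓝 (pstar i)) := by
      have := hMs_to.mul_const (pstar i)
      simpa using this
    exact tendsto_of_tendsto_of_tendsto_of_le_of_le hlow hhigh
      (fun n => mn_mul_le hne hps_pos i) (fun n => le_Mx_mul hne hps_pos i)
  have hfinal : Tendsto (fun n => Ttil^[n + 1] p1) atTop (𝓝 pstar) := by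
    refine hs_tend.congr fun n => ?_
    rw [hsdef]
    exact (Function.iterate_succ_apply _ _ _).symm
  exact (tendsto_add_atTop_iff_nat 1).mp hfinal

end Conv

end Stmt7Aux


/-- Proposition 2 (ii): the normalized mapping `T̃ p = (pbar / ‖T p‖) • T p` of a
continuous standard interference mapping `T` has a unique (strictly positive) fixed
point `p*`; the pair `(pbar / ‖T p*‖, p*)` is the unique solution of problem (4);
and the fixed point iteration `p_{n+1} = T̃ p_n` converges to `p*` from any starting
point in the nonnegative orthant. -/
theorem stmt7 {K : ℕ} (hK : 0 < K) (N : (Fin K → ℝ) → ℝ) (hN : IsMonoNorm N)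
    (pbar : ℝ) (hpbar : 0 < pbar)
    (T : (Fin K → ℝ) → Fin K → ℝ) (hT : ∀ k, StdIF fun p => T p k)
    (hTc : ContinuousOn T (NonnegOrth K))
    (Ttil : (Fin K → ℝ) → Fin K → ℝ)
    (hTtil : ∀ p, Ttil p = (pbar / N (T p)) • T p) :
    ∃ pstar : Fin K → ℝ, (∀ i, 0 < pstar i) ∧ Ttil pstar = pstar ∧
      (∀ q ∈ NonnegOrth K, Ttil q = q → q = pstar) ∧
      Sol4 N pbar T (pbar / N (T pstar)) pstar ∧
      (∀ c p, Sol4 N pbar T c p → c = pbar / N (T pstar) ∧ p = pstar) ∧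
      ∀ p1 ∈ NonnegOrth K, Tendsto (fun n => Ttil^[n] p1) atTop (𝓝 pstar) := by
  haveI : Nonempty (Fin K) := ⟨⟨0, hK⟩⟩
  have hne : (Finset.univ : Finset (Fin K)).Nonempty := Finset.univ_nonempty
  obtain ⟨cstar, pstar, hcs_pos, hps_orth, hps_pos, hfix_star, hNps, hmax⟩ :=
    Stmt7Aux.exists_eigen hK hN hpbar hT hTc
  have hNTps : 0 < N (T pstar) := Stmt7Aux.NT_pos hK hN hT hps_orth
  have hcs_eq : cstar = pbar / N (T pstar) := by
    have h1 : N pstar = cstar * N (T pstar) := by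
      have h0 : pstar = cstar • T pstar := funext hfix_star
      conv_lhs => rw [h0]
      rw [Stmt7Aux.N_smul hN, abs_of_pos hcs_pos]
    rw [hNps] at h1
    rw [eq_div_iff hNTps.ne']
    exact h1.symm
  have hfixstar : Ttil pstar = pstar := by
    rw [hTtil pstar, ← hcs_eq]
    exact (funext hfix_star).symm
  refine ⟨pstar, hps_pos, hfixstar, ?_, ?_, ?_, ?_⟩
  · -- uniqueness of fixed points of the normalized mapping
    intro q hq hfq
    by_contra hne'
    have hqpos : ∀ i, 0 < q i := by
      have h2 := (Stmt7Aux.Tt_basic hK hN hpbar hT hTtil hq).1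
      intro i
      rw [← hfq]
      exact h2 i
    have hNq : N q = pbar := by
      have h2 := (Stmt7Aux.Tt_basic hK hN hpbar hT hTtil hq).2.2
      rwa [hfq] at h2
    have hcore := Stmt7Aux.contract' hne hK hN hpbar hT hTtil hps_orth hps_pos hNps
      hfixstar hq hqpos hNq hne'
    rw [hfq] at hcore
    exact lt_irrefl _ hcore
  · -- (cstar, pstar) solves problem (4)
    constructor
    · refine ⟨(div_pos hpbar hNTps).le, hps_orth, hNps.le, ?_⟩
      rw [← hcs_eq]
      exact funext hfix_star
    · rintro c' p' ⟨hc'0, hp'orth, hNp', hfix'⟩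
      rw [← hcs_eq]
      rcases eq_or_lt_of_le hc'0 with h0 | h0
      · rw [← h0]; exact hcs_pos.le
      · exact hmax c' p' h0 hp'orth (fun i => (congrFun hfix' i).ge) hNp'
  · -- uniqueness of solutions of problem (4)
    rintro c p ⟨⟨hc0, hp_orth, hNp, hfix⟩, hopt⟩
    have hfeas_star : Feas4 N pbar T cstar pstar :=
      ⟨hcs_pos.le, hps_orth, hNps.le, funext hfix_star⟩
    have h1 : cstar ≤ c := hopt cstar pstar hfeas_star
    have hcpos : 0 < c := lt_of_lt_of_le hcs_pos h1
    have h2 : c ≤ cstar := hmax c p hcpos hp_orth (fun i => (congrFun hfix i).ge) hNp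
    have hceq : c = cstar := le_antisymm h2 h1
    constructor
    · rw [hceq, hcs_eq]
    · refine Stmt7Aux.fix_unique hne hT hcpos hp_orth hps_orth
        (fun i => congrFun hfix i) (fun i => ?_)
      rw [hceq]
      exact hfix_star i
  · -- convergence of the fixed point iteration
    intro p1 hp1
    exact Stmt7Aux.converge hK hN hpbar hT hTc hTtil hps_orth hps_pos hNps hfixstar hp1
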